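/- Let A be a set and F(A) the free group on A. For any u, v ∈ F(A) and any generators a, b ∈ A, the equality u*a*u⁻¹ = v*b*v⁻¹ holds in F(A) if and only if a = b and u⁻¹*v lies in the cyclic subgroup of F(A) generated by a. Consequently, the map (u, a) ↦ u*a*u⁻¹ from F(A) × A to F(A) identifies exactly those pairs (u, a) and (v, b) that are related by the quandle equivalence generated by (w, a) ∼ (w*a, a), so the induced map from the free quandle FQ(A) into the conjugation rack of F(A) is injective. -/

import Mathlib

/-- The generating relation of the free quandle as a quotient of the free rack:
`(w, a) ∼ (w * a, a)`. -/
def quandleRel (A : Type*) : FreeGroup A × A → FreeGroup A × A → Prop :=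
  fun p q => q = (p.1 * FreeGroup.of p.2, p.2)

section Aux

variable {A : Type*}

private lemma red_eq_of_length {L₁ L₂ : List (A × Bool)} (h : FreeGroup.Red L₁ L₂)
    (hl : L₁.length = L₂.length) : L₁ = L₂ := by
  rcases Relation.ReflTransGen.cases_head h with rfl | ⟨c, hstep, hred⟩
  · rfl
  · have h1 := FreeGroup.Red.Step.length hstep
    have h2 := FreeGroup.Red.length_le hred
    omega

private lemma reduce_tail [DecidableEq A] {x : A × Bool} {t : List (A × Bool)}
    (h : FreeGroup.reduce (x :: t) = x :: t) : FreeGroup.reduce t = t := by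
  rw [FreeGroup.reduce.cons] at h
  rcases hr : FreeGroup.reduce t with _ | ⟨y, s⟩ <;> rw [hr] at h
  · simp only [] at h
    injection h
  · simp only [] at h
    split_ifs at h with hc
    · exfalso
      have hlen : (FreeGroup.reduce t).length ≤ t.length :=
        FreeGroup.Red.length_le (FreeGroup.reduce.red)
      rw [hr] at hlen
      have := congrArg List.length h
      simp at this hlen
      omega
    · injection h

private lemma of_eq_mk (a : A) : FreeGroup.of a = FreeGroup.mk [(a, true)] := rfl

private lemma invRev_single_true (a : A) :
    FreeGroup.invRev [(a, true)] = [(a, false)] := by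
  simp [FreeGroup.invRev]

/-- If `w` commutes with a generator `of a` in the free group, then `w` is a power of `of a`. -/
private lemma mem_zpowers_of_commute [DecidableEq A] (a : A) :
    ∀ n (w : FreeGroup A), w.toWord.length = n →
      w * FreeGroup.of a = FreeGroup.of a * w →
      w ∈ Subgroup.zpowers (FreeGroup.of a) := by
  intro n
  induction n using Nat.strong_induction_on with
  | _ n ih =>
  intro w hlen hcomm
  rcases hL : w.toWord with _ | ⟨⟨x, b⟩, t⟩
  · have : w = 1 := FreeGroup.toWord_eq_nil_iff.mp hL
    rw [this]; exact one_mem _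
  · have hred : FreeGroup.reduce ((x, b) :: t) = (x, b) :: t := by
      rw [← hL]; exact FreeGroup.reduce_toWord w
    have hredt : FreeGroup.reduce t = t := reduce_tail hred
    have htw : (FreeGroup.mk t).toWord = t := by rw [FreeGroup.toWord_mk, hredt]
    by_cases hxa : x = a
    · subst hxa
      -- w = (of x)^{±1} * mk t
      have hw : w = FreeGroup.mk [(x, b)] * FreeGroup.mk t := by
        rw [FreeGroup.mul_mk, List.singleton_append, ← hL, FreeGroup.mk_toWord]
      have hhead : FreeGroup.mk [(x, b)] ∈ Subgroup.zpowers (FreeGroup.of x) := by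
        cases b
        · have : FreeGroup.mk [(x, false)] = (FreeGroup.of x)⁻¹ := by
            rw [of_eq_mk, FreeGroup.inv_mk, invRev_single_true]
          rw [this]; exact inv_mem (Subgroup.mem_zpowers _)
        · exact Subgroup.mem_zpowers _
      have hcomm' : (FreeGroup.mk t) * FreeGroup.of x = FreeGroup.of x * (FreeGroup.mk t) := by
        have h1 : Commute (FreeGroup.of x) w := hcomm.symm
        have h2 : Commute (FreeGroup.of x) (FreeGroup.mk [(x, b)]) := by
          rcases hhead with ⟨k, hk⟩
          rw [← hk]; exact (Commute.refl _).zpow_right k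
        have h3 : Commute (FreeGroup.of x) (FreeGroup.mk t) := by
          have : FreeGroup.mk t = (FreeGroup.mk [(x, b)])⁻¹ * w := by
            rw [hw, inv_mul_cancel_left]
          rw [this]
          exact (h2.inv_right).mul_right h1
        exact h3.symm
      have hlt : t.length < n := by rw [← hlen, hL]; simp
      have hmem := ih t.length hlt (FreeGroup.mk t) (by rw [htw]) hcomm'
      rw [hw]
      exact mul_mem hhead hmem
    · exfalso
      -- compare reduced words of w * of a and of a * w
      have e1 : FreeGroup.of a * w = FreeGroup.mk ((a, true) :: (x, b) :: t) := by
        conv_lhs => rw [← FreeGroup.mk_toWord (x := w), hL]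
        rw [of_eq_mk, FreeGroup.mul_mk]; rfl
      have e2 : w * FreeGroup.of a = FreeGroup.mk (((x, b) :: t) ++ [(a, true)]) := by
        conv_lhs => rw [← FreeGroup.mk_toWord (x := w), hL]
        rw [of_eq_mk, FreeGroup.mul_mk]
      have hred1 : FreeGroup.reduce ((a, true) :: (x, b) :: t) = (a, true) :: (x, b) :: t := by
        rw [FreeGroup.reduce.cons, hred]
        simp only []
        rw [if_neg]
        rintro ⟨h1, -⟩
        exact hxa h1.symm
      have hsound : FreeGroup.reduce (((x, b) :: t) ++ [(a, true)]) =
          FreeGroup.reduce ((a, true) :: (x, b) :: t) :=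
        FreeGroup.reduce.sound (by rw [← e1, ← e2, hcomm])
      have hredw : FreeGroup.Red (((x, b) :: t) ++ [(a, true)]) ((a, true) :: (x, b) :: t) := by
        have := FreeGroup.reduce.red (L := ((x, b) :: t) ++ [(a, true)])
        rwa [hsound, hred1] at this
      have heq : ((x, b) :: t) ++ [(a, true)] = (a, true) :: (x, b) :: t :=
        red_eq_of_length hredw (by simp)
      have : (x, b) = (a, true) := by
        have := congrArg List.head? heq
        simpa using this
      exact hxa (by simpa using congrArg Prod.fst this)

private lemma eq_of_of_conj (φ : FreeGroup A →* Multiplicative (A →₀ ℤ))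
    (hφ : ∀ x, φ (FreeGroup.of x) = Multiplicative.ofAdd (Finsupp.single x 1))
    {u v : FreeGroup A} {a b : A}
    (h : u * FreeGroup.of a * u⁻¹ = v * FreeGroup.of b * v⁻¹) : a = b := by
  have h2 := congrArg φ h
  simp only [map_mul, map_inv] at h2
  have ha : φ u * φ (FreeGroup.of a) * (φ u)⁻¹ = φ (FreeGroup.of a) := by
    rw [mul_comm (φ u) _, mul_assoc, mul_inv_cancel, mul_one]
  have hb : φ v * φ (FreeGroup.of b) * (φ v)⁻¹ = φ (FreeGroup.of b) := by
    rw [mul_comm (φ v) _, mul_assoc, mul_inv_cancel, mul_one]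
  rw [ha, hb, hφ, hφ] at h2
  have h3 : (Finsupp.single a (1 : ℤ)) = Finsupp.single b 1 := by
    exact_mod_cast h2
  exact Finsupp.single_left_injective one_ne_zero h3

end Aux

/-- In the free group, `u*a*u⁻¹ = v*b*v⁻¹` iff `a = b` and `u⁻¹*v ∈ ⟨a⟩`.
Consequently the map `(u, a) ↦ u*a*u⁻¹` identifies exactly pairs related by the
equivalence generated by `(w, a) ∼ (w*a, a)`, so the induced map from the free
quandle `FQ(A)` into the conjugation rack of `F(A)` is injective. -/
theorem stmt_3 (A : Type*) :
    (∀ (u v : FreeGroup A) (a b : A),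
      u * FreeGroup.of a * u⁻¹ = v * FreeGroup.of b * v⁻¹ ↔
        a = b ∧ u⁻¹ * v ∈ Subgroup.zpowers (FreeGroup.of a)) ∧
    (∀ p q : FreeGroup A × A,
      p.1 * FreeGroup.of p.2 * p.1⁻¹ = q.1 * FreeGroup.of q.2 * q.1⁻¹ ↔
        Relation.EqvGen (quandleRel A) p q) ∧
    (∀ p q : FreeGroup A × A,
      Quot.mk (quandleRel A) p = Quot.mk (quandleRel A) q ↔
        p.1 * FreeGroup.of p.2 * p.1⁻¹ = q.1 * FreeGroup.of q.2 * q.1⁻¹) := by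
  classical
  set φ : FreeGroup A →* Multiplicative (A →₀ ℤ) :=
    FreeGroup.lift (fun x => Multiplicative.ofAdd (Finsupp.single x 1)) with hφdef
  have hφ : ∀ x, φ (FreeGroup.of x) = Multiplicative.ofAdd (Finsupp.single x 1) := by
    intro x; simp [hφdef]
  have part1 : ∀ (u v : FreeGroup A) (a b : A),
      u * FreeGroup.of a * u⁻¹ = v * FreeGroup.of b * v⁻¹ ↔
        a = b ∧ u⁻¹ * v ∈ Subgroup.zpowers (FreeGroup.of a) := by
    intro u v a b
    constructor
    · intro h
      have hab : a = b := eq_of_of_conj φ hφ h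
      subst hab
      refine ⟨rfl, ?_⟩
      have hcomm : (v⁻¹ * u) * FreeGroup.of a = FreeGroup.of a * (v⁻¹ * u) := by
        calc v⁻¹ * u * FreeGroup.of a = v⁻¹ * (u * FreeGroup.of a * u⁻¹) * u := by group
        _ = v⁻¹ * (v * FreeGroup.of a * v⁻¹) * u := by rw [h]
        _ = FreeGroup.of a * (v⁻¹ * u) := by group
      have hmem := mem_zpowers_of_commute a _ (v⁻¹ * u) rfl hcomm
      have : u⁻¹ * v = (v⁻¹ * u)⁻¹ := by group
      rw [this]
      exact inv_mem hmem
    · rintro ⟨rfl, hv⟩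
      rcases Subgroup.mem_zpowers_iff.mp hv with ⟨k, hk⟩
      have hveq : v = u * (FreeGroup.of a) ^ k := by
        rw [hk]; group
      subst hveq
      group
  have part2 : ∀ p q : FreeGroup A × A,
      p.1 * FreeGroup.of p.2 * p.1⁻¹ = q.1 * FreeGroup.of q.2 * q.1⁻¹ ↔
        Relation.EqvGen (quandleRel A) p q := by
    have step : ∀ (u : FreeGroup A) (a : A) (k : ℤ),
        Relation.EqvGen (quandleRel A) (u, a) (u * (FreeGroup.of a) ^ k, a) := by
      intro u a k
      induction k using Int.induction_on with
      | zero => simpa using Relation.EqvGen.refl (u, a)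
      | succ n ihn =>
        refine Relation.EqvGen.trans _ _ _ ihn ?_
        have : (u * (FreeGroup.of a) ^ ((n : ℤ) + 1), a) =
            ((u * (FreeGroup.of a) ^ (n : ℤ)) * FreeGroup.of a, a) := by
          rw [zpow_add_one, mul_assoc]
        rw [this]
        exact Relation.EqvGen.rel _ _ rfl
      | pred n ihn =>
        refine Relation.EqvGen.trans _ _ _ ihn ?_
        refine Relation.EqvGen.symm _ _ ?_
        have : (u * (FreeGroup.of a) ^ (-(n : ℤ)), a) =
            ((u * (FreeGroup.of a) ^ (-(n : ℤ) - 1)) * FreeGroup.of a, a) := by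
          congr 1
          rw [mul_assoc, ← zpow_add_one]
          ring_nf
        rw [this]
        exact Relation.EqvGen.rel _ _ rfl
    intro p q
    constructor
    · intro h
      rcases (part1 p.1 q.1 p.2 q.2).mp h with ⟨hab, hmem⟩
      rcases Subgroup.mem_zpowers_iff.mp hmem with ⟨k, hk⟩
      have hq1 : q.1 = p.1 * (FreeGroup.of p.2) ^ k := by
        rw [hk]; group
      have hq : q = (p.1 * (FreeGroup.of p.2) ^ k, p.2) := by
        cases q; cases p; simp_all
      rw [hq]
      exact step p.1 p.2 k
    · intro h
      induction h with
      | rel x y hxy =>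
        rw [hxy]
        simp only []
        group
      | refl x => rfl
      | symm x y _ ih => exact ih.symm
      | trans x y z _ _ ih1 ih2 => exact ih1.trans ih2
  refine ⟨part1, part2, ?_⟩
  intro p q
  rw [Quot.eq]
  exact (part2 p q).symm
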